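/- arXiv:1805.11692 — 7 statements merged into one kernel-verified Lean document; each statement's English description precedes it below -/
import Mathlib

section
/- A finite group G can be written as the union of three proper subgroups if and only if G has a quotient isomorphic to the Klein four-group C2 × C2. -/
/-- A group is not the union of two proper subgroups: there is an element outside both. -/
lemma exists_notMem_two {G : Type*} [Group G] {K L : Subgroup G}
    (hK : K ≠ ⊤) (hL : L ≠ ⊤) : ∃ g : G, g ∉ K ∧ g ∉ L := by
  obtain ⟨x, hx⟩ : ∃ x : G, x ∉ K := by
    by_contra h; push_neg at h; exact hK ((Subgroup.eq_top_iff' K).mpr h)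
  obtain ⟨y, hy⟩ : ∃ y : G, y ∉ L := by
    by_contra h; push_neg at h; exact hL ((Subgroup.eq_top_iff' L).mpr h)
  by_cases hxL : x ∈ L
  · by_cases hyK : y ∈ K
    · refine ⟨x * y, fun h => hx ?_, fun h => hy ?_⟩
      · have := K.mul_mem h (K.inv_mem hyK); simpa using this
      · have := L.mul_mem (L.inv_mem hxL) h; simpa using this
    · exact ⟨y, hyK, hy⟩
  · exact ⟨x, hx, hxL⟩

/-- Key step of Scorza's theorem: if a group is covered by three proper subgroups, then the
complement of each of them is multiplicatively closed into it (it has "index two" behavior). -/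
lemma keyP {G : Type*} [Group G] {K L M : Subgroup G}
    (hcov : ∀ g : G, g ∈ K ∨ g ∈ L ∨ g ∈ M)
    (hK : K ≠ ⊤) (hL : L ≠ ⊤) (hM : M ≠ ⊤) :
    ∀ x y : G, x ∉ K → y ∉ K → x * y ∈ K := by
  have nm : ∀ (P : Subgroup G) (u v : G), u ∈ P → v ∉ P → u * v ∉ P :=
    fun P u v hu hv h => hv (by simpa using P.mul_mem (P.inv_mem hu) h)
  have nm' : ∀ (P : Subgroup G) (u v : G), u ∉ P → v ∈ P → u * v ∉ P :=
    fun P u v hu hv h => hu (by simpa using P.mul_mem h (P.inv_mem hv))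
  have res : ∀ g : G, g ∉ L → g ∉ M → g ∈ K := fun g h2 h3 => by
    rcases hcov g with h|h|h; exacts [h, absurd h h2, absurd h h3]
  have resL : ∀ g : G, g ∉ K → g ∉ M → g ∈ L := fun g h1 h3 => by
    rcases hcov g with h|h|h; exacts [absurd h h1, h, absurd h h3]
  have resM : ∀ g : G, g ∉ K → g ∉ L → g ∈ M := fun g h1 h2 => by
    rcases hcov g with h|h|h; exacts [absurd h h1, absurd h h2, h]
  -- pure elements
  obtain ⟨a, haL, haM⟩ := exists_notMem_two hL hM
  have haK : a ∈ K := res a haL haM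
  obtain ⟨b, hbK, hbM⟩ := exists_notMem_two hK hM
  have hbL : b ∈ L := resL b hbK hbM
  obtain ⟨c, hcK, hcL⟩ := exists_notMem_two hK hL
  have hcM : c ∈ M := resM c hcK hcL
  -- b⁻¹ * c and c⁻¹ * b are in K
  have hbc : b⁻¹ * c ∈ K := by
    have h2 : b⁻¹ * c ∉ L := fun h => hcL (by simpa using L.mul_mem hbL h)
    have h3 : b⁻¹ * c ∉ M := fun h =>
      hbM (by simpa [mul_inv_rev, mul_assoc] using M.mul_mem hcM (M.inv_mem h))
    exact res _ h2 h3
  have hcb : c⁻¹ * b ∈ K := by simpa [mul_inv_rev] using K.inv_mem hbc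
  -- L ⊓ M ≤ K
  have hbcK : b * c ∈ K := res _ (nm L b c hbL hcL) (nm' M b c hbM hcM)
  have hbcL : b * c ∉ L := nm L b c hbL hcL
  have hbcM : b * c ∉ M := nm' M b c hbM hcM
  have hLM : ∀ x : G, x ∈ L → x ∈ M → x ∈ K := by
    intro x hxL hxM
    have h2 : b * c * x ∉ L := nm' L _ x hbcL hxL
    have h3 : b * c * x ∉ M := nm' M _ x hbcM hxM
    have h1 : b * c * x ∈ K := res _ h2 h3
    have := K.mul_mem (K.inv_mem hbcK) h1
    simpa [mul_inv_rev, mul_assoc] using this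
  -- every element outside K is in the coset bN or cN where N = K ⊓ L ⊓ M
  have coverK : ∀ x : G, x ∉ K →
      (b⁻¹*x ∈ K ∧ b⁻¹*x ∈ L ∧ b⁻¹*x ∈ M) ∨ (c⁻¹*x ∈ K ∧ c⁻¹*x ∈ L ∧ c⁻¹*x ∈ M) := by
    intro x hxK
    rcases hcov x with h|hxL|hxM
    · exact absurd h hxK
    · left
      have hxM : x ∉ M := fun h => hxK (hLM x hxL h)
      have e1 : c * b ∈ K := res _ (nm' L c b hcL hbL) (nm M c b hcM hbM)
      have e2 : c * x ∈ K := res _ (nm' L c x hcL hxL) (nm M c x hcM hxM)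
      have e3 : a * b ∈ M := resM _ (nm K a b haK hbK) (nm' L a b haL hbL)
      have e4 : a * x ∈ M := resM _ (nm K a x haK hxK) (nm' L a x haL hxL)
      refine ⟨?_, L.mul_mem (L.inv_mem hbL) hxL, ?_⟩
      · have := K.mul_mem (K.inv_mem e1) e2
        simpa [mul_inv_rev, mul_assoc] using this
      · have := M.mul_mem (M.inv_mem e3) e4
        simpa [mul_inv_rev, mul_assoc] using this
    · right
      have hxL : x ∉ L := fun h => hxK (hLM x h hxM)
      have e1 : b * c ∈ K := hbcK
      have e2 : b * x ∈ K := res _ (nm L b x hbL hxL) (nm' M b x hbM hxM)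
      have e3 : a * c ∈ L := resL _ (nm K a c haK hcK) (nm' M a c haM hcM)
      have e4 : a * x ∈ L := resL _ (nm K a x haK hxK) (nm' M a x haM hxM)
      refine ⟨?_, ?_, M.mul_mem (M.inv_mem hcM) hxM⟩
      · have := K.mul_mem (K.inv_mem e1) e2
        simpa [mul_inv_rev, mul_assoc] using this
      · have := L.mul_mem (L.inv_mem e3) e4
        simpa [mul_inv_rev, mul_assoc] using this
  intro x y hx hy
  have hx' : x⁻¹ ∉ K := fun h => hx (by simpa using K.inv_mem h)
  rcases coverK x⁻¹ hx' with ⟨n1K, -, -⟩|⟨n1K, -, -⟩ <;>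
    rcases coverK y hy with ⟨n2K, -, -⟩|⟨n2K, -, -⟩
  · have e : x*y = (b⁻¹*x⁻¹)⁻¹ * (b⁻¹*y) := by group
    rw [e]; exact K.mul_mem (K.inv_mem n1K) n2K
  · have e : x*y = (b⁻¹*x⁻¹)⁻¹ * ((b⁻¹*c) * (c⁻¹*y)) := by group
    rw [e]; exact K.mul_mem (K.inv_mem n1K) (K.mul_mem hbc n2K)
  · have e : x*y = (c⁻¹*x⁻¹)⁻¹ * ((c⁻¹*b) * (b⁻¹*y)) := by group
    rw [e]; exact K.mul_mem (K.inv_mem n1K) (K.mul_mem hcb n2K)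
  · have e : x*y = (c⁻¹*x⁻¹)⁻¹ * (c⁻¹*y) := by group
    rw [e]; exact K.mul_mem (K.inv_mem n1K) n2K

open Classical in
/-- The sign homomorphism associated to a subgroup whose complement multiplies into it. -/
noncomputable def indexTwoHom {G : Type*} [Group G] (H : Subgroup G)
    (hP : ∀ x y : G, x ∉ H → y ∉ H → x * y ∈ H) :
    G →* Multiplicative (ZMod 2) :=
  MonoidHom.mk' (fun x => if x ∈ H then 1 else Multiplicative.ofAdd 1) (by
    intro x y
    by_cases hx : x ∈ H <;> by_cases hy : y ∈ H
    · simp [hx, hy, H.mul_mem hx hy]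
    · have h : x * y ∉ H := fun h => hy (by simpa using H.mul_mem (H.inv_mem hx) h)
      simp [hx, hy, h]
    · have h : x * y ∉ H := fun h => hx (by simpa using H.mul_mem h (H.inv_mem hy))
      simp [hx, hy, h]
    · have h := hP x y hx hy
      simp only [hx, hy, h, if_true, if_false, if_pos]
      decide)

open Classical in
lemma indexTwoHom_apply {G : Type*} [Group G] (H : Subgroup G)
    (hP : ∀ x y : G, x ∉ H → y ∉ H → x * y ∈ H) (x : G) :
    indexTwoHom H hP x = if x ∈ H then 1 else Multiplicative.ofAdd 1 := rfl

theorem union_of_three_proper_iff_klein_quotient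
    (G : Type*) [Group G] [Finite G] :
    (∃ H1 H2 H3 : Subgroup G, H1 ≠ ⊤ ∧ H2 ≠ ⊤ ∧ H3 ≠ ⊤ ∧
      (H1 : Set G) ∪ (H2 : Set G) ∪ (H3 : Set G) = Set.univ) ↔
    (∃ φ : G →* Multiplicative (ZMod 2) × Multiplicative (ZMod 2), Function.Surjective φ) := by
  constructor
  · rintro ⟨H1, H2, H3, h1, h2, h3, hU⟩
    have hcov : ∀ g : G, g ∈ H1 ∨ g ∈ H2 ∨ g ∈ H3 := by
      intro g
      have := Set.eq_univ_iff_forall.mp hU g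
      simp only [Set.mem_union, SetLike.mem_coe] at this
      tauto
    have hcov2 : ∀ g : G, g ∈ H2 ∨ g ∈ H1 ∨ g ∈ H3 := fun g => by have := hcov g; tauto
    have P1 := keyP hcov h1 h2 h3
    have P2 := keyP hcov2 h2 h1 h3
    set χ1 := indexTwoHom H1 P1 with hχ1
    set χ2 := indexTwoHom H2 P2 with hχ2
    refine ⟨χ1.prod χ2, ?_⟩
    -- find suitable elements
    obtain ⟨a, ha2, ha3⟩ := exists_notMem_two h2 h3
    have ha1 : a ∈ H1 := by rcases hcov a with h|h|h <;> tauto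
    obtain ⟨b, hb1, hb3⟩ := exists_notMem_two h1 h3
    have hb2 : b ∈ H2 := by rcases hcov b with h|h|h <;> tauto
    have hab1 : a * b ∉ H1 := fun h => hb1 (by simpa using H1.mul_mem (H1.inv_mem ha1) h)
    have hab2 : a * b ∉ H2 := fun h => ha2 (by simpa using H2.mul_mem h (H2.inv_mem hb2))
    intro z
    have hz : ∀ w : Multiplicative (ZMod 2), w = 1 ∨ w = Multiplicative.ofAdd 1 := by decide
    obtain ⟨u, v⟩ := z
    rcases hz u with hu|hu <;> rcases hz v with hv|hv <;> subst hu <;> subst hv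
    · exact ⟨1, by simp [MonoidHom.prod_apply, hχ1, hχ2, indexTwoHom_apply, H1.one_mem, H2.one_mem]⟩
    · exact ⟨a, by simp [MonoidHom.prod_apply, hχ1, hχ2, indexTwoHom_apply, ha1, ha2]⟩
    · exact ⟨b, by simp [MonoidHom.prod_apply, hχ1, hχ2, indexTwoHom_apply, hb1, hb2]⟩
    · exact ⟨a * b, by simp [MonoidHom.prod_apply, hχ1, hχ2, indexTwoHom_apply, hab1, hab2]⟩
  · rintro ⟨φ, hφ⟩
    refine ⟨((MonoidHom.fst _ _).comp φ).ker, ((MonoidHom.snd _ _).comp φ).ker,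
      ((MonoidHom.fst (Multiplicative (ZMod 2)) (Multiplicative (ZMod 2)) * MonoidHom.snd (Multiplicative (ZMod 2)) (Multiplicative (ZMod 2))).comp φ).ker, ?_, ?_, ?_, ?_⟩
    · intro h
      obtain ⟨g, hg⟩ := hφ (Multiplicative.ofAdd 1, 1)
      have : g ∈ ((MonoidHom.fst _ _).comp φ).ker := h ▸ Subgroup.mem_top g
      rw [MonoidHom.mem_ker, MonoidHom.comp_apply, hg] at this
      exact absurd this (by decide)
    · intro h
      obtain ⟨g, hg⟩ := hφ (1, Multiplicative.ofAdd 1)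
      have : g ∈ ((MonoidHom.snd _ _).comp φ).ker := h ▸ Subgroup.mem_top g
      rw [MonoidHom.mem_ker, MonoidHom.comp_apply, hg] at this
      exact absurd this (by decide)
    · intro h
      obtain ⟨g, hg⟩ := hφ (Multiplicative.ofAdd 1, 1)
      have : g ∈ ((MonoidHom.fst (Multiplicative (ZMod 2)) (Multiplicative (ZMod 2)) * MonoidHom.snd (Multiplicative (ZMod 2)) (Multiplicative (ZMod 2))).comp φ).ker := h ▸ Subgroup.mem_top g
      rw [MonoidHom.mem_ker, MonoidHom.comp_apply, hg] at this
      exact absurd this (by decide)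
    · apply Set.eq_univ_iff_forall.mpr
      intro g
      simp only [Set.mem_union, SetLike.mem_coe, MonoidHom.mem_ker, MonoidHom.comp_apply]
      have key : ∀ w : Multiplicative (ZMod 2) × Multiplicative (ZMod 2),
          (MonoidHom.fst _ _) w = 1 ∨ (MonoidHom.snd _ _) w = 1 ∨
          (MonoidHom.fst (Multiplicative (ZMod 2)) (Multiplicative (ZMod 2)) * MonoidHom.snd (Multiplicative (ZMod 2)) (Multiplicative (ZMod 2))) w = 1 := by decide
      have := key (φ g); tauto
end

section
/- If G = H1 ∪ H2 ∪ H3 where H1, H2, H3 are irredundant proper subgroups of a group G (no Hi is contained in the union of the other two), then the intersection H = H1 ∩ H2 ∩ H3 is a normal subgroup of G. -/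
private lemma aux_normal {G : Type*} [Group G] (A B C : Subgroup G)
    (cover : ∀ g : G, g ∈ A ∨ g ∈ B ∨ g ∈ C)
    (a : G) (haA : a ∈ A) (haB : a ∉ B) (haC : a ∉ C) : A.Normal := by
  -- B ∩ C ⊆ A
  have hint : ∀ x, x ∈ B → x ∈ C → x ∈ A := by
    intro x hB hC
    rcases cover (a * x) with h | h | h
    · exact (mul_mem_cancel_left haA).mp h
    · exact absurd ((mul_mem_cancel_right hB).mp h) haB
    · exact absurd ((mul_mem_cancel_right hC).mp h) haC
  -- same-subgroup case
  have same : ∀ (D E : Subgroup G), (∀ g : G, g ∈ A ∨ g ∈ D ∨ g ∈ E) →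
      a ∉ D → (∀ x, x ∈ D → x ∈ E → x ∈ A) →
      ∀ x y : G, x ∉ A → y ∉ A → x ∈ D → y ∈ D → x * y⁻¹ ∈ A := by
    intro D E cov haD hDE x y hxA hyA hxD hyD
    by_contra hne
    have hax : a * x ∈ E := by
      rcases cov (a * x) with h | h | h
      · exact absurd ((mul_mem_cancel_left haA).mp h) hxA
      · exact absurd ((mul_mem_cancel_right hxD).mp h) haD
      · exact h
    have hxyD : x * y⁻¹ ∈ D := mul_mem hxD (inv_mem hyD)
    have haxy : a * (x * y⁻¹) ∈ E := by
      rcases cov (a * (x * y⁻¹)) with h | h | h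
      · exact absurd ((mul_mem_cancel_left haA).mp h) hne
      · exact absurd ((mul_mem_cancel_right hxyD).mp h) haD
      · exact h
    have hy : y⁻¹ ∈ E := by
      have h := mul_mem (inv_mem hax) haxy
      have heq : (a * x)⁻¹ * (a * (x * y⁻¹)) = y⁻¹ := by group
      rwa [heq] at h
    exact hyA (hDE y hyD (inv_mem_iff.mp hy))
  -- mixed case
  have mixed : ∀ x y : G, x ∉ A → y ∉ A → x ∈ B → y ∈ C → x * y⁻¹ ∈ A := by
    intro x y hxA hyA hxB hyC
    by_cases hxC : x ∈ C
    · exact absurd (hint x hxB hxC) hxA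
    by_cases hyB : y ∈ B
    · exact absurd (hint y hyB hyC) hyA
    rcases cover (x * y⁻¹) with h | h | h
    · exact h
    · exact absurd (inv_mem_iff.mp ((mul_mem_cancel_left hxB).mp h)) hyB
    · exact absurd ((mul_mem_cancel_right (inv_mem hyC)).mp h) hxC
  have hdiff : ∀ x y : G, x ∉ A → y ∉ A → x * y⁻¹ ∈ A := by
    intro x y hxA hyA
    rcases cover x with hx | hx | hx
    · exact absurd hx hxA
    all_goals rcases cover y with hy | hy | hy
    · exact absurd hy hyA
    · exact same B C cover haB hint x y hxA hyA hx hy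
    · exact mixed x y hxA hyA hx hy
    · exact absurd hy hyA
    · have := mixed y x hyA hxA hy hx
      have h2 := inv_mem this
      rwa [mul_inv_rev, inv_inv] at h2
    · exact same C B (fun g => by rcases cover g with h | h | h <;> tauto) haC
        (fun x h h' => hint x h' h) x y hxA hyA hx hy
  constructor
  intro n hn g
  by_cases hg : g ∈ A
  · exact mul_mem (mul_mem hg hn) (inv_mem hg)
  · have hgn : g * n ∉ A := fun h => hg (by
      have := mul_mem h (inv_mem hn)
      rwa [mul_assoc, mul_inv_cancel, mul_one] at this)
    exact hdiff (g * n) g hgn hg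

theorem inter_of_irredundant_cover_normal
    {G : Type*} [Group G] (H1 H2 H3 : Subgroup G)
    (h1 : H1 ≠ ⊤) (h2 : H2 ≠ ⊤) (h3 : H3 ≠ ⊤)
    (irr1 : ¬ (H1 : Set G) ⊆ (H2 : Set G) ∪ (H3 : Set G))
    (irr2 : ¬ (H2 : Set G) ⊆ (H1 : Set G) ∪ (H3 : Set G))
    (irr3 : ¬ (H3 : Set G) ⊆ (H1 : Set G) ∪ (H2 : Set G))
    (hcover : (H1 : Set G) ∪ (H2 : Set G) ∪ (H3 : Set G) = Set.univ) :
    (H1 ⊓ H2 ⊓ H3).Normal := by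
  rw [Set.not_subset] at irr1 irr2 irr3
  obtain ⟨a, ha1, ha23⟩ := irr1
  obtain ⟨b, hb2, hb13⟩ := irr2
  obtain ⟨c, hc3, hc12⟩ := irr3
  simp only [Set.mem_union, SetLike.mem_coe, not_or] at ha23 hb13 hc12 ha1 hb2 hc3
  have cover : ∀ g : G, g ∈ H1 ∨ g ∈ H2 ∨ g ∈ H3 := by
    intro g
    have : g ∈ (H1 : Set G) ∪ (H2 : Set G) ∪ (H3 : Set G) := hcover ▸ Set.mem_univ g
    simpa [or_assoc] using this
  have n1 : H1.Normal := aux_normal H1 H2 H3 cover a ha1 ha23.1 ha23.2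
  have n2 : H2.Normal := aux_normal H2 H1 H3 (fun g => by rcases cover g with h|h|h <;> tauto)
    b hb2 hb13.1 hb13.2
  have n3 : H3.Normal := aux_normal H3 H1 H2 (fun g => by rcases cover g with h|h|h <;> tauto)
    c hc3 hc12.1 hc12.2
  constructor
  intro n hn g
  simp only [Subgroup.mem_inf] at hn ⊢
  exact ⟨⟨n1.conj_mem n hn.1.1 g, n2.conj_mem n hn.1.2 g⟩, n3.conj_mem n hn.2 g⟩
end

section
/- If G = H1 ∪ H2 ∪ H3 where H1, H2, H3 are irredundant proper subgroups of a group G, then x² ∈ H1 ∩ H2 ∩ H3 for every x ∈ G. -/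
private lemma aux_sq_mem {G : Type*} [Group G] (A B C : Subgroup G)
    (a : G) (haA : a ∈ A) (haB : a ∉ B) (haC : a ∉ C)
    (b : G) (hbB : b ∈ B) (hbA : b ∉ A) (hbC : b ∉ C)
    (c : G) (hcC : c ∈ C) (hcA : c ∉ A) (hcB : c ∉ B)
    (hcov : ∀ x : G, x ∈ A ∨ x ∈ B ∨ x ∈ C)
    (x : G) : x ^ 2 ∈ A := by
  have key : ∀ w : G, x * w ∉ B → x * w ∉ C → w⁻¹ * x ∉ B → w⁻¹ * x ∉ C →
      x ^ 2 ∈ A := by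
    intro w h1 h2 h3 h4
    have m1 : x * w ∈ A := by rcases hcov (x * w) with h | h | h <;> tauto
    have m2 : w⁻¹ * x ∈ A := by rcases hcov (w⁻¹ * x) with h | h | h <;> tauto
    have : (x * w) * (w⁻¹ * x) = x ^ 2 := by rw [pow_two]; group
    rw [← this]; exact mul_mem m1 m2
  by_cases hxA : x ∈ A
  · exact pow_mem hxA 2
  by_cases hxB : x ∈ B
  · by_cases hxC : x ∈ C
    · -- x ∈ B ∩ C, use w = a
      refine key a ?_ ?_ ?_ ?_
      · intro h; exact haB (by simpa using mul_mem (inv_mem hxB) h)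
      · intro h; exact haC (by simpa using mul_mem (inv_mem hxC) h)
      · intro h; exact haB (by
          have := mul_mem h (inv_mem hxB)
          simpa using inv_mem this)
      · intro h; exact haC (by
          have := mul_mem h (inv_mem hxC)
          simpa using inv_mem this)
    · -- x ∈ B only, use w = c
      refine key c ?_ ?_ ?_ ?_
      · intro h; exact hcB (by simpa using mul_mem (inv_mem hxB) h)
      · intro h; exact hxC (by simpa using mul_mem h (inv_mem hcC))
      · intro h; exact hcB (by
          have := mul_mem h (inv_mem hxB)
          simpa using inv_mem this)
      · intro h; exact hxC (by simpa using mul_mem hcC h)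
  · have hxC : x ∈ C := by rcases hcov x with h | h | h <;> tauto
    -- x ∈ C only, use w = b
    refine key b ?_ ?_ ?_ ?_
    · intro h; exact hxB (by simpa using mul_mem h (inv_mem hbB))
    · intro h; exact hbC (by simpa using mul_mem (inv_mem hxC) h)
    · intro h; exact hxB (by simpa using mul_mem hbB h)
    · intro h; exact hbC (by
        have := mul_mem h (inv_mem hxC)
        simpa using inv_mem this)

theorem sq_mem_inter_of_irredundant_cover
    {G : Type*} [Group G] (H1 H2 H3 : Subgroup G)
    (h1 : H1 ≠ ⊤) (h2 : H2 ≠ ⊤) (h3 : H3 ≠ ⊤)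
    (irr1 : ¬ (H1 : Set G) ⊆ (H2 : Set G) ∪ (H3 : Set G))
    (irr2 : ¬ (H2 : Set G) ⊆ (H1 : Set G) ∪ (H3 : Set G))
    (irr3 : ¬ (H3 : Set G) ⊆ (H1 : Set G) ∪ (H2 : Set G))
    (hcover : (H1 : Set G) ∪ (H2 : Set G) ∪ (H3 : Set G) = Set.univ) :
    ∀ x : G, x ^ 2 ∈ H1 ⊓ H2 ⊓ H3 := by
  obtain ⟨a, haA, ha⟩ := Set.not_subset.mp irr1
  obtain ⟨b, hbB, hb⟩ := Set.not_subset.mp irr2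
  obtain ⟨c, hcC, hc⟩ := Set.not_subset.mp irr3
  simp only [Set.mem_union, not_or] at ha hb hc
  have hcov : ∀ x : G, x ∈ H1 ∨ x ∈ H2 ∨ x ∈ H3 := by
    intro x
    have : x ∈ ((H1 : Set G) ∪ (H2 : Set G) ∪ (H3 : Set G)) := by
      rw [hcover]; trivial
    rcases this with (h | h) | h <;> tauto
  intro x
  refine ⟨⟨?_, ?_⟩, ?_⟩
  · exact aux_sq_mem H1 H2 H3 a haA ha.1 ha.2 b hbB hb.1 hb.2 c hcC hc.1 hc.2 hcov x
  · exact aux_sq_mem H2 H1 H3 b hbB hb.1 hb.2 a haA ha.1 ha.2 c hcC hc.2 hc.1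
      (fun x => by rcases hcov x with h | h | h <;> tauto) x
  · exact aux_sq_mem H3 H1 H2 c hcC hc.1 hc.2 a haA ha.2 ha.1 b hbB hb.2 hb.1
      (fun x => by rcases hcov x with h | h | h <;> tauto) x
end

section
/- If G = H1 ∪ H2 ∪ H3 where H1, H2, H3 are irredundant proper subgroups of a group G, then the quotient G / (H1 ∩ H2 ∩ H3) is isomorphic to C2 × C2. -/
private lemma aux_sub {G : Type*} [Group G] (H1 H2 H3 : Subgroup G)
    {a : G} (ha1 : a ∈ H1) (ha2 : a ∉ H2) (ha3 : a ∉ H3)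
    (cover : ∀ x : G, x ∈ H1 ∨ x ∈ H2 ∨ x ∈ H3) :
    ∀ x, x ∈ H2 → x ∈ H3 → x ∈ H1 := by
  intro x hx2 hx3
  rcases cover (x * a) with h | h | h
  · simpa using H1.mul_mem h (H1.inv_mem ha1)
  · exact absurd (by simpa using H2.mul_mem (H2.inv_mem hx2) h) ha2
  · exact absurd (by simpa using H3.mul_mem (H3.inv_mem hx3) h) ha3

private lemma aux_same {G : Type*} [Group G] (H1 H2 H3 : Subgroup G)
    {a : G} (ha1 : a ∈ H1) (ha2 : a ∉ H2) (ha3 : a ∉ H3)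
    (cover : ∀ x : G, x ∈ H1 ∨ x ∈ H2 ∨ x ∈ H3) :
    ∀ x y, x ∉ H1 → y ∉ H1 → x ∈ H2 → y ∈ H2 → x * y ∈ H1 := by
  intro x y hx hy hx2 hy2
  by_contra hxy
  have hax3 : a * x ∈ H3 := by
    rcases cover (a * x) with h | h | h
    · exact absurd (by simpa using H1.mul_mem (H1.inv_mem ha1) h) hx
    · exact absurd (by simpa using H2.mul_mem h (H2.inv_mem hx2)) ha2
    · exact h
  have haxy3 : a * (x * y) ∈ H3 := by
    rcases cover (a * (x * y)) with h | h | h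
    · exact absurd (by simpa using H1.mul_mem (H1.inv_mem ha1) h) hxy
    · exact absurd (by simpa [mul_assoc] using H2.mul_mem h (H2.inv_mem (H2.mul_mem hx2 hy2))) ha2
    · exact h
  have hy3 : y ∈ H3 := by
    have := H3.mul_mem (H3.inv_mem hax3) haxy3
    simpa [mul_assoc] using this
  exact hy (aux_sub H1 H2 H3 ha1 ha2 ha3 cover y hy2 hy3)

private lemma aux_two {G : Type*} [Group G] (H1 H2 H3 : Subgroup G)
    {a : G} (ha1 : a ∈ H1) (ha2 : a ∉ H2) (ha3 : a ∉ H3)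
    (cover : ∀ x : G, x ∈ H1 ∨ x ∈ H2 ∨ x ∈ H3) :
    ∀ x y, x ∉ H1 → y ∉ H1 → x * y ∈ H1 := by
  have cover' : ∀ x : G, x ∈ H1 ∨ x ∈ H3 ∨ x ∈ H2 := fun x => by
    rcases cover x with h | h | h <;> tauto
  have s1 := aux_sub H1 H2 H3 ha1 ha2 ha3 cover
  intro x y hx hy
  rcases cover x with hx1 | hx2 | hx3
  · exact absurd hx1 hx
  · rcases cover y with hy1 | hy2 | hy3
    · exact absurd hy1 hy
    · exact aux_same H1 H2 H3 ha1 ha2 ha3 cover x y hx hy hx2 hy2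
    · -- x ∈ H2, y ∈ H3
      rcases cover (x * y) with h | h | h
      · exact h
      · exact absurd (s1 y (by simpa using H2.mul_mem (H2.inv_mem hx2) h) hy3) hy
      · exact absurd (s1 x hx2 (by simpa using H3.mul_mem h (H3.inv_mem hy3))) hx
  · rcases cover y with hy1 | hy2 | hy3
    · exact absurd hy1 hy
    · -- x ∈ H3, y ∈ H2
      rcases cover (x * y) with h | h | h
      · exact h
      · exact absurd (s1 x (by simpa using H2.mul_mem h (H2.inv_mem hy2)) hx3) hx
      · exact absurd (s1 y hy2 (by simpa using H3.mul_mem (H3.inv_mem hx3) h)) hy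
    · exact aux_same H1 H3 H2 ha1 ha3 ha2 cover' x y hx hy hx3 hy3

theorem quotient_of_irredundant_cover_is_klein
    {G : Type*} [Group G] (H1 H2 H3 : Subgroup G)
    (h1 : H1 ≠ ⊤) (h2 : H2 ≠ ⊤) (h3 : H3 ≠ ⊤)
    (irr1 : ¬ (H1 : Set G) ⊆ (H2 : Set G) ∪ (H3 : Set G))
    (irr2 : ¬ (H2 : Set G) ⊆ (H1 : Set G) ∪ (H3 : Set G))
    (irr3 : ¬ (H3 : Set G) ⊆ (H1 : Set G) ∪ (H2 : Set G))
    (hcover : (H1 : Set G) ∪ (H2 : Set G) ∪ (H3 : Set G) = Set.univ) :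
    ∃ φ : G →* Multiplicative (ZMod 2) × Multiplicative (ZMod 2), Function.Surjective φ ∧ φ.ker = H1 ⊓ H2 ⊓ H3 := by
  classical
  obtain ⟨a, ha1, ha⟩ := Set.not_subset.mp irr1
  obtain ⟨b, hb2, hb⟩ := Set.not_subset.mp irr2
  obtain ⟨c, hc3, hc⟩ := Set.not_subset.mp irr3
  simp only [Set.mem_union, SetLike.mem_coe, not_or] at ha hb hc
  obtain ⟨ha2, ha3⟩ := ha
  obtain ⟨hb1, hb3⟩ := hb
  obtain ⟨hc1, hc2⟩ := hc
  have ha1 : a ∈ H1 := ha1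
  have hb2 : b ∈ H2 := hb2
  have hc3 : c ∈ H3 := hc3
  have cover : ∀ x : G, x ∈ H1 ∨ x ∈ H2 ∨ x ∈ H3 := by
    intro x
    have : x ∈ (H1 : Set G) ∪ (H2 : Set G) ∪ (H3 : Set G) := hcover ▸ Set.mem_univ x
    simpa [or_assoc] using this
  have cover2 : ∀ x : G, x ∈ H2 ∨ x ∈ H1 ∨ x ∈ H3 := fun x => by
    rcases cover x with h | h | h <;> tauto
  have cover3 : ∀ x : G, x ∈ H3 ∨ x ∈ H1 ∨ x ∈ H2 := fun x => by
    rcases cover x with h | h | h <;> tauto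
  have two1 := aux_two H1 H2 H3 ha1 ha2 ha3 cover
  have two2 := aux_two H2 H1 H3 hb2 hb1 hb3 cover2
  have sub3 := aux_sub H3 H1 H2 hc3 hc1 hc2 cover3
  set u : Multiplicative (ZMod 2) := Multiplicative.ofAdd 1 with hu_def
  have huu : u * u = 1 := by decide
  have hu1 : u ≠ 1 := by decide
  have mulmem1 : ∀ x y : G, (if x * y ∈ H1 then (1:Multiplicative (ZMod 2)) else u)
      = (if x ∈ H1 then 1 else u) * (if y ∈ H1 then 1 else u) := by
    intro x y
    by_cases hx : x ∈ H1 <;> by_cases hy : y ∈ H1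
    · simp [hx, hy, H1.mul_mem hx hy]
    · have : x * y ∉ H1 := fun h => hy (by simpa using H1.mul_mem (H1.inv_mem hx) h)
      simp [hx, hy, this]
    · have : x * y ∉ H1 := fun h => hx (by simpa using H1.mul_mem h (H1.inv_mem hy))
      simp [hx, hy, this]
    · simp [hx, hy, two1 x y hx hy, huu.symm]
  have mulmem2 : ∀ x y : G, (if x * y ∈ H2 then (1:Multiplicative (ZMod 2)) else u)
      = (if x ∈ H2 then 1 else u) * (if y ∈ H2 then 1 else u) := by
    intro x y
    by_cases hx : x ∈ H2 <;> by_cases hy : y ∈ H2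
    · simp [hx, hy, H2.mul_mem hx hy]
    · have : x * y ∉ H2 := fun h => hy (by simpa using H2.mul_mem (H2.inv_mem hx) h)
      simp [hx, hy, this]
    · have : x * y ∉ H2 := fun h => hx (by simpa using H2.mul_mem h (H2.inv_mem hy))
      simp [hx, hy, this]
    · simp [hx, hy, two2 x y hx hy, huu.symm]
  refine ⟨MonoidHom.mk' (fun g => (if g ∈ H1 then 1 else u, if g ∈ H2 then 1 else u))
      (fun x y => by dsimp; rw [mulmem1 x y, mulmem2 x y]), ?_, ?_⟩
  · intro z
    have hz : z = (1, 1) ∨ z = (u, 1) ∨ z = (1, u) ∨ z = (u, u) := by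
      rcases z with ⟨z1, z2⟩
      revert z1 z2; decide
    rcases hz with h | h | h | h
    · exact ⟨1, by simp [h, MonoidHom.mk'_apply, H1.one_mem, H2.one_mem]⟩
    · exact ⟨b, by simp [h, MonoidHom.mk'_apply, hb1, hb2]⟩
    · exact ⟨a, by simp [h, MonoidHom.mk'_apply, ha1, ha2]⟩
    · exact ⟨c, by simp [h, MonoidHom.mk'_apply, hc1, hc2]⟩
  · ext x
    simp only [MonoidHom.mem_ker, MonoidHom.mk'_apply, Prod.mk_eq_one, Subgroup.mem_inf]
    constructor
    · rintro ⟨p, q⟩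
      have hx1 : x ∈ H1 := by by_contra h; simp [h] at p; exact hu1 p
      have hx2 : x ∈ H2 := by by_contra h; simp [h] at q; exact hu1 q
      exact ⟨⟨hx1, hx2⟩, sub3 x hx1 hx2⟩
    · rintro ⟨⟨hx1, hx2⟩, _⟩
      simp [hx1, hx2]
end

section
/- For a finite group G, if G has a unique normal subgroup N with G/N isomorphic to C2 × C2, then G can be written in exactly one way as the union of three irredundant proper subgroups. -/
/-- `S` is a covering of `G` by three irredundant proper subgroups. -/
def IsIrredundantTripleCover {G : Type*} [Group G] (S : Set (Subgroup G)) : Prop :=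
  ∃ H1 H2 H3 : Subgroup G, S = {H1, H2, H3} ∧
    H1 ≠ ⊤ ∧ H2 ≠ ⊤ ∧ H3 ≠ ⊤ ∧
    ¬ (H1 : Set G) ⊆ (H2 : Set G) ∪ (H3 : Set G) ∧
    ¬ (H2 : Set G) ⊆ (H1 : Set G) ∪ (H3 : Set G) ∧
    ¬ (H3 : Set G) ⊆ (H1 : Set G) ∪ (H2 : Set G) ∧
    (H1 : Set G) ∪ (H2 : Set G) ∪ (H3 : Set G) = Set.univ

namespace UniqueKleinCover

abbrev V2' := Multiplicative (ZMod 2)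
abbrev V4' := V2' × V2'

def e1 : V4' := (Multiplicative.ofAdd 1, 1)
def e2 : V4' := (1, Multiplicative.ofAdd 1)
def e3 : V4' := (Multiplicative.ofAdd 1, Multiplicative.ofAdd 1)

lemma v4_cases (p : V4') : p = 1 ∨ p = e1 ∨ p = e2 ∨ p = e3 := by revert p; decide

def K1 : Subgroup V4' := (MonoidHom.snd V2' V2').ker
def K2 : Subgroup V4' := (MonoidHom.fst V2' V2').ker
def K3 : Subgroup V4' := ((MonoidHom.fst V2' V2') * (MonoidHom.snd V2' V2')).ker

lemma memK1 (p : V4') : p ∈ K1 ↔ p = 1 ∨ p = e1 := by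
  simp only [K1, MonoidHom.mem_ker]; revert p; decide
lemma memK2 (p : V4') : p ∈ K2 ↔ p = 1 ∨ p = e2 := by
  simp only [K2, MonoidHom.mem_ker]; revert p; decide
lemma memK3 (p : V4') : p ∈ K3 ↔ p = 1 ∨ p = e3 := by
  simp only [K3, MonoidHom.mem_ker, MonoidHom.mul_apply]; revert p; decide

lemma v4_two_gen' : ∀ (x y p : V4'),
    x = 1 ∨ y = 1 ∨ x = y ∨ p = 1 ∨ p = x ∨ p = y ∨ p = x * y := by decide

lemma v4_two_gen (x y p : V4') (hx : x ≠ 1) (hy : y ≠ 1) (hxy : x ≠ y) :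
    p = 1 ∨ p = x ∨ p = y ∨ p = x * y := by
  rcases v4_two_gen' x y p with h|h|h|h|h|h|h <;> tauto

lemma triple_set_eq {α : Type*} {x y z a b c : α}
    (ha : a = x ∨ a = y ∨ a = z) (hb : b = x ∨ b = y ∨ b = z) (hc : c = x ∨ c = y ∨ c = z)
    (hab : a ≠ b) (hac : a ≠ c) (hbc : b ≠ c) :
    ({a, b, c} : Set α) = {x, y, z} := by
  rcases ha with rfl | rfl | rfl <;> rcases hb with rfl | rfl | rfl <;>
    rcases hc with rfl | rfl | rfl <;>
    first
      | exact absurd rfl hab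
      | exact absurd rfl hac
      | exact absurd rfl hbc
      | (ext w; simp only [Set.mem_insert_iff, Set.mem_singleton_iff]; try tauto)

lemma subgroup_classify (K : Subgroup V4') (hK : K ≠ ⊤) {x : V4'} (hx : x ∈ K) (hx1 : x ≠ 1) :
    K = K1 ∨ K = K2 ∨ K = K3 := by
  have htop : ∀ y ∈ K, y = 1 ∨ y = x := by
    intro y hy
    by_contra hne
    push_neg at hne
    apply hK
    ext p
    simp only [Subgroup.mem_top, iff_true]
    rcases v4_two_gen x y p hx1 hne.1 (fun h => hne.2 h.symm) with rfl|rfl|rfl|rfl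
    exacts [one_mem K, hx, hy, mul_mem hx hy]
  rcases v4_cases x with rfl|rfl|rfl|rfl
  · exact absurd rfl hx1
  · refine Or.inl ?_
    ext p; rw [memK1]
    exact ⟨fun hp => htop p hp, by rintro (rfl|rfl); exacts [one_mem K, hx]⟩
  · refine Or.inr (Or.inl ?_)
    ext p; rw [memK2]
    exact ⟨fun hp => htop p hp, by rintro (rfl|rfl); exacts [one_mem K, hx]⟩
  · refine Or.inr (Or.inr ?_)
    ext p; rw [memK3]
    exact ⟨fun hp => htop p hp, by rintro (rfl|rfl); exacts [one_mem K, hx]⟩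

section
variable {G : Type*} [Group G] {A B C : Subgroup G} {a b c : G}

lemma cover_inf (hU : ∀ g, g ∈ A ∨ g ∈ B ∨ g ∈ C)
    (hcC : c ∈ C) (hcA : c ∉ A) (hcB : c ∉ B) :
    ∀ x, x ∈ A → x ∈ B → x ∈ C := by
  intro x hxA hxB
  rcases hU (x * c) with h | h | h
  · exact absurd (by simpa using mul_mem (inv_mem hxA) h) hcA
  · exact absurd (by simpa using mul_mem (inv_mem hxB) h) hcB
  · simpa using mul_mem h (inv_mem hcC)

lemma cover_mul_mem (hU : ∀ g, g ∈ A ∨ g ∈ B ∨ g ∈ C)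
    (haA : a ∈ A) (haB : a ∉ B) (haC : a ∉ C)
    (hbB : b ∈ B) (hbA : b ∉ A) (hbC : b ∉ C)
    (hcC : c ∈ C) (hcA : c ∉ A) (hcB : c ∉ B) :
    ∀ g h, g ∉ A → h ∉ A → g * h ∈ A := by
  have hBC : ∀ x, x ∈ B → x ∈ C → x ∈ A := by
    intro x hxB hxC
    have hU' : ∀ g, g ∈ B ∨ g ∈ C ∨ g ∈ A := fun g => by rcases hU g with h|h|h <;> tauto
    exact cover_inf hU' haA haB haC x hxB hxC
  have hcb : c * b⁻¹ ∈ A := by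
    rcases hU (c * b⁻¹) with h | h | h
    · exact h
    · exact absurd (by simpa using mul_mem h hbB) hcB
    · exact absurd (by simpa using inv_mem (mul_mem (inv_mem hcC) h)) hbC
  have key : ∀ x, x ∉ A → c * x ∈ A := by
    intro x hxA
    rcases hU x with hx | hx | hx
    · exact absurd hx hxA
    · have hxC : x ∉ C := fun hxC => hxA (hBC x hx hxC)
      rcases hU (c * x) with h | h | h
      · exact h
      · exact absurd (by simpa using mul_mem h (inv_mem hx)) hcB
      · exact absurd (by simpa using mul_mem (inv_mem hcC) h) hxC
    · have hxB : x ∉ B := fun hxB => hxA (hBC x hxB hx)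
      have hbx : b * x ∈ A := by
        rcases hU (b * x) with h | h | h
        · exact h
        · exact absurd (by simpa using mul_mem (inv_mem hbB) h) hxB
        · exact absurd (by simpa using mul_mem h (inv_mem hx)) hbC
      simpa [mul_assoc] using mul_mem hcb hbx
  intro g h hg hh
  have h1 : c * g⁻¹ ∈ A := key _ (fun hh' => hg (by simpa using inv_mem hh'))
  have h2 : c * h ∈ A := key _ hh
  simpa [mul_assoc] using mul_mem (inv_mem h1) h2

open Classical in
noncomputable def chi (A : Subgroup G) (hmul : ∀ g h, g ∉ A → h ∉ A → g * h ∈ A) : G →* V2' where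
  toFun g := Multiplicative.ofAdd (if g ∈ A then 0 else 1)
  map_one' := by simp [one_mem]
  map_mul' g h := by
    by_cases hg : g ∈ A <;> by_cases hh : h ∈ A
    · have : g * h ∈ A := mul_mem hg hh
      simp [hg, hh, this]
    · have : g * h ∉ A := fun hm => hh (by simpa using mul_mem (inv_mem hg) hm)
      simp [hg, hh, this]
    · have : g * h ∉ A := fun hm => hg (by simpa using mul_mem hm (inv_mem hh))
      simp [hg, hh, this]
    · have : g * h ∈ A := hmul g h hg hh
      simp [hg, hh, this]
      rfl

lemma chi_mem {A : Subgroup G} {hmul} {g : G} (hg : g ∈ A) : chi A hmul g = 1 := by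
  simp [chi, hg]

lemma chi_not_mem {A : Subgroup G} {hmul} {g : G} (hg : g ∉ A) :
    chi A hmul g = Multiplicative.ofAdd 1 := by simp [chi, hg]

lemma chi_ker {A : Subgroup G} {hmul} : (chi A hmul).ker = A := by
  ext g
  rw [MonoidHom.mem_ker]
  constructor
  · intro hg
    by_contra hgA
    rw [chi_not_mem hgA] at hg
    exact (by decide : (Multiplicative.ofAdd (1 : ZMod 2)) ≠ 1) hg
  · exact chi_mem

lemma classify_comap (φ : G →* V4') (X : Subgroup G) (hX : X ≠ ⊤) (hk : φ.ker ≤ X)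
    (x : G) (hx : x ∈ X) (hxk : x ∉ φ.ker) :
    X = K1.comap φ ∨ X = K2.comap φ ∨ X = K3.comap φ := by
  have hXeq : X = (X.map φ).comap φ := (Subgroup.comap_map_eq_self hk).symm
  have hmtop : X.map φ ≠ ⊤ := by
    intro htop
    rw [htop, Subgroup.comap_top] at hXeq
    exact hX hXeq
  have hmem : φ x ∈ X.map φ := Subgroup.mem_map_of_mem φ hx
  have hne1 : φ x ≠ 1 := fun h1 => hxk (by simp [MonoidHom.mem_ker, h1])
  rcases subgroup_classify (X.map φ) hmtop hmem hne1 with hK | hK | hK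
  · exact Or.inl (by rw [hXeq, hK])
  · exact Or.inr (Or.inl (by rw [hXeq, hK]))
  · exact Or.inr (Or.inr (by rw [hXeq, hK]))

end

end UniqueKleinCover

open UniqueKleinCover in
theorem unique_klein_quotient_imp_unique_cover
    (G : Type*) [Group G] [Finite G]
    (h : ∃! N : Subgroup G,
      ∃ φ : G →* Multiplicative (ZMod 2) × Multiplicative (ZMod 2), Function.Surjective φ ∧ φ.ker = N) :
    ∃! S : Set (Subgroup G), IsIrredundantTripleCover S := by
  obtain ⟨N, ⟨φ, hφs, hφk⟩, hNu⟩ := h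
  set S₀ : Set (Subgroup G) := {K1.comap φ, K2.comap φ, K3.comap φ} with hS₀
  obtain ⟨g1, hg1⟩ := hφs e1
  obtain ⟨g2, hg2⟩ := hφs e2
  obtain ⟨g3, hg3⟩ := hφs e3
  have hg1m1 : g1 ∈ K1.comap φ := by rw [Subgroup.mem_comap, hg1, memK1]; exact Or.inr rfl
  have hg1m2 : g1 ∉ K2.comap φ := by rw [Subgroup.mem_comap, hg1, memK2]; decide
  have hg1m3 : g1 ∉ K3.comap φ := by rw [Subgroup.mem_comap, hg1, memK3]; decide
  have hg2m1 : g2 ∉ K1.comap φ := by rw [Subgroup.mem_comap, hg2, memK1]; decide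
  have hg2m2 : g2 ∈ K2.comap φ := by rw [Subgroup.mem_comap, hg2, memK2]; exact Or.inr rfl
  have hg2m3 : g2 ∉ K3.comap φ := by rw [Subgroup.mem_comap, hg2, memK3]; decide
  have hg3m1 : g3 ∉ K1.comap φ := by rw [Subgroup.mem_comap, hg3, memK1]; decide
  have hg3m2 : g3 ∉ K2.comap φ := by rw [Subgroup.mem_comap, hg3, memK2]; decide
  have hg3m3 : g3 ∈ K3.comap φ := by rw [Subgroup.mem_comap, hg3, memK3]; exact Or.inr rfl
  have hex : IsIrredundantTripleCover S₀ := by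
    refine ⟨K1.comap φ, K2.comap φ, K3.comap φ, hS₀, ?_, ?_, ?_, ?_, ?_, ?_, ?_⟩
    · intro ht; exact hg2m1 (ht ▸ Subgroup.mem_top g2)
    · intro ht; exact hg1m2 (ht ▸ Subgroup.mem_top g1)
    · intro ht; exact hg1m3 (ht ▸ Subgroup.mem_top g1)
    · intro hsub
      rcases hsub hg1m1 with h | h
      · exact hg1m2 h
      · exact hg1m3 h
    · intro hsub
      rcases hsub hg2m2 with h | h
      · exact hg2m1 h
      · exact hg2m3 h
    · intro hsub
      rcases hsub hg3m3 with h | h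
      · exact hg3m1 h
      · exact hg3m2 h
    · apply Set.eq_univ_iff_forall.mpr
      intro g
      rcases v4_cases (φ g) with hg | hg | hg | hg
      · exact Or.inl (Or.inl (by rw [SetLike.mem_coe, Subgroup.mem_comap, hg]; exact one_mem _))
      · exact Or.inl (Or.inl (by rw [SetLike.mem_coe, Subgroup.mem_comap, hg, memK1]; exact Or.inr rfl))
      · exact Or.inl (Or.inr (by rw [SetLike.mem_coe, Subgroup.mem_comap, hg, memK2]; exact Or.inr rfl))
      · exact Or.inr (by rw [SetLike.mem_coe, Subgroup.mem_comap, hg, memK3]; exact Or.inr rfl)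
  refine ⟨S₀, hex, ?_⟩
  · rintro S ⟨A, B, C, hS, hA, hB, hC, hiA, hiB, hiC, hU⟩
    obtain ⟨a, haA, ha'⟩ := Set.not_subset.mp hiA
    obtain ⟨b, hbB, hb'⟩ := Set.not_subset.mp hiB
    obtain ⟨c, hcC, hc'⟩ := Set.not_subset.mp hiC
    rw [Set.mem_union] at ha' hb' hc'
    push_neg at ha' hb' hc'
    obtain ⟨haB, haC⟩ := ha'
    obtain ⟨hbA, hbC⟩ := hb'
    obtain ⟨hcA, hcB⟩ := hc'
    rw [SetLike.mem_coe] at haA hbB hcC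
    rw [SetLike.mem_coe] at haB haC hbA hbC hcA hcB
    have hU' : ∀ g, g ∈ A ∨ g ∈ B ∨ g ∈ C := by
      intro g
      have := Set.eq_univ_iff_forall.mp hU g
      rcases this with (h | h) | h
      · exact Or.inl h
      · exact Or.inr (Or.inl h)
      · exact Or.inr (Or.inr h)
    have hU'' : ∀ g, g ∈ B ∨ g ∈ A ∨ g ∈ C := fun g => by rcases hU' g with h|h|h <;> tauto
    have hmulA := cover_mul_mem hU' haA haB haC hbB hbA hbC hcC hcA hcB
    have hmulB := cover_mul_mem hU'' hbB hbA hbC haA haB haC hcC hcB hcA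
    set ψ := (chi A hmulA).prod (chi B hmulB) with hψ
    have hψker : ψ.ker = A ⊓ B := by rw [hψ, MonoidHom.ker_prod, chi_ker, chi_ker]
    have hψs : Function.Surjective ψ := by
      intro q
      rcases v4_cases q with rfl | rfl | rfl | rfl
      · exact ⟨1, map_one ψ⟩
      · refine ⟨b, ?_⟩
        show ((chi A hmulA) b, (chi B hmulB) b) = e1
        rw [chi_not_mem hbA, chi_mem hbB]; rfl
      · refine ⟨a, ?_⟩
        show ((chi A hmulA) a, (chi B hmulB) a) = e2
        rw [chi_mem haA, chi_not_mem haB]; rfl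
      · refine ⟨c, ?_⟩
        show ((chi A hmulA) c, (chi B hmulB) c) = e3
        rw [chi_not_mem hcA, chi_not_mem hcB]; rfl
    have hABN : A ⊓ B = N := hNu _ ⟨ψ, hψs, hψker⟩
    have hker : φ.ker = A ⊓ B := by rw [hφk, hABN]
    have hkA : φ.ker ≤ A := hker ▸ inf_le_left
    have hkB : φ.ker ≤ B := hker ▸ inf_le_right
    have hkC : φ.ker ≤ C := by
      intro x hx
      rw [hker, Subgroup.mem_inf] at hx
      exact cover_inf hU' hcC hcA hcB x hx.1 hx.2
    have hak : a ∉ φ.ker := by rw [hker, Subgroup.mem_inf]; tauto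
    have hbk : b ∉ φ.ker := by rw [hker, Subgroup.mem_inf]; tauto
    have hck : c ∉ φ.ker := by rw [hker, Subgroup.mem_inf]; tauto
    have hAm := classify_comap φ A hA hkA a haA hak
    have hBm := classify_comap φ B hB hkB b hbB hbk
    have hCm := classify_comap φ C hC hkC c hcC hck
    have hABne : A ≠ B := fun hh => haB (hh ▸ haA)
    have hACne : A ≠ C := fun hh => haC (hh ▸ haA)
    have hBCne : B ≠ C := fun hh => hbC (hh ▸ hbB)
    rw [hS, hS₀]
    exact triple_set_eq hAm hBm hCm hABne hACne hBCne
end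

section
/- For a finite group G, G has a unique quotient isomorphic to C2 × C2 if and only if G has a quotient isomorphic to C2 × C2 and no quotient isomorphic to C2 × C2 × C2. -/
local notation "M" => Multiplicative (ZMod 2)

lemma zmod2_two_elts : ∀ x y z : M, x ≠ z → y ≠ z → x = y := by decide

lemma aux_c2cubed {G : Type*} [Group G] (φ₁ φ₂ : G →* M × M)
    (h₁ : Function.Surjective φ₁) (hle : ¬ φ₁.ker ≤ φ₂.ker) :
    ∃ ψ : G →* M × M × M, Function.Surjective ψ := by
  obtain ⟨n, hn1, hn2⟩ : ∃ n, n ∈ φ₁.ker ∧ φ₂ n ≠ 1 := by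
    simpa [SetLike.le_def, MonoidHom.mem_ker] using hle
  have hcoord : (φ₂ n).1 ≠ 1 ∨ (φ₂ n).2 ≠ 1 := by
    by_contra h; push_neg at h; exact hn2 (Prod.ext h.1 h.2)
  obtain ⟨f, hf⟩ : ∃ f : M × M →* M, f (φ₂ n) ≠ 1 :=
    hcoord.elim (fun h => ⟨MonoidHom.fst M M, h⟩) (fun h => ⟨MonoidHom.snd M M, h⟩)
  refine ⟨((MonoidHom.fst M M).comp φ₁).prod
    ((((MonoidHom.snd M M).comp φ₁)).prod (f.comp φ₂)), ?_⟩
  rintro ⟨a, b, c⟩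
  obtain ⟨g, hg⟩ := h₁ (a, b)
  have hkn : φ₁ n = 1 := hn1
  by_cases hc : f (φ₂ g) = c
  · exact ⟨g, by simp [MonoidHom.prod_apply, hg, hc]⟩
  · refine ⟨g * n, ?_⟩
    have h2 : f (φ₂ g) * f (φ₂ n) ≠ f (φ₂ g) := by
      intro h; apply hf; have h' := h.symm; rwa [left_eq_mul] at h'
    have hc' : f (φ₂ g) * f (φ₂ n) = c := by
      have := zmod2_two_elts (f (φ₂ g) * f (φ₂ n)) c (f (φ₂ g)) h2 (Ne.symm hc)
      exact this.symm ▸ rfl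
    simp [MonoidHom.prod_apply, map_mul, hg, hkn, hc']

theorem unique_klein_quotient_iff_no_c2_cubed_quotient
    (G : Type*) [Group G] [Finite G] :
    (∃! N : Subgroup G,
      ∃ φ : G →* Multiplicative (ZMod 2) × Multiplicative (ZMod 2), Function.Surjective φ ∧ φ.ker = N) ↔
    ((∃ φ : G →* Multiplicative (ZMod 2) × Multiplicative (ZMod 2), Function.Surjective φ) ∧
      ¬ ∃ ψ : G →* Multiplicative (ZMod 2) × Multiplicative (ZMod 2) × Multiplicative (ZMod 2), Function.Surjective ψ) := by
  constructor
  · rintro ⟨N, ⟨φ, hφ, hker⟩, huniq⟩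
    refine ⟨⟨φ, hφ⟩, ?_⟩
    rintro ⟨ψ, hψ⟩
    set pa : M × M × M →* M × M :=
      (MonoidHom.fst M (M × M)).prod ((MonoidHom.fst M M).comp (MonoidHom.snd M (M × M))) with hpa
    set pb : M × M × M →* M × M :=
      (MonoidHom.fst M (M × M)).prod ((MonoidHom.snd M M).comp (MonoidHom.snd M (M × M))) with hpb
    have hpas : Function.Surjective pa := fun ⟨x, y⟩ => ⟨(x, y, 1), rfl⟩
    have hpbs : Function.Surjective pb := fun ⟨x, y⟩ => ⟨(x, 1, y), rfl⟩
    have ha := huniq (pa.comp ψ).ker ⟨pa.comp ψ, hpas.comp hψ, rfl⟩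
    have hb := huniq (pb.comp ψ).ker ⟨pb.comp ψ, hpbs.comp hψ, rfl⟩
    have hab : (pa.comp ψ).ker = (pb.comp ψ).ker := ha.trans hb.symm
    obtain ⟨g, hg⟩ := hψ (1, 1, Multiplicative.ofAdd 1)
    have hga : g ∈ (pa.comp ψ).ker := by
      simp [MonoidHom.mem_ker, MonoidHom.comp_apply, hg, hpa, Prod.ext_iff]
    have hgb : g ∉ (pb.comp ψ).ker := by
      simp [MonoidHom.mem_ker, MonoidHom.comp_apply, hg, hpb, Prod.ext_iff]
    exact hgb (hab ▸ hga)
  · rintro ⟨⟨φ, hφ⟩, h3⟩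
    refine ⟨φ.ker, ⟨φ, hφ, rfl⟩, ?_⟩
    rintro N' ⟨φ', hφ', rfl⟩
    by_contra hne
    rcases (not_and_or.mp (fun h => hne (le_antisymm h.1 h.2))) with h | h
    · exact h3 (aux_c2cubed φ' φ hφ' h)
    · exact h3 (aux_c2cubed φ φ' hφ h)
end

section
/- If A is a finite group of odd order, then the group Q8 × A can uniquely be written as the union of three proper subgroups. -/
open QuaternionGroup

/-! Auxiliary general group lemmas -/

private lemma exists_notMem' {G : Type*} [Group G] {K : Subgroup G} (h : K ≠ ⊤) :
    ∃ x, x ∉ K := by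
  by_contra hc
  push_neg at hc
  exact h ((Subgroup.eq_top_iff' K).mpr hc)

private lemma not_cover_two {G : Type*} [Group G] {K1 K2 : Subgroup G}
    (h1 : K1 ≠ ⊤) (h2 : K2 ≠ ⊤) : ∃ x, x ∉ K1 ∧ x ∉ K2 := by
  obtain ⟨x, hx⟩ := exists_notMem' h1
  obtain ⟨y, hy⟩ := exists_notMem' h2
  by_cases hx2 : x ∉ K2
  · exact ⟨x, hx, hx2⟩
  by_cases hy1 : y ∉ K1
  · exact ⟨y, hy1, hy⟩
  push_neg at hx2 hy1
  refine ⟨x * y, fun h => hx ?_, fun h => hy ?_⟩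
  · have := mul_mem h (inv_mem hy1); simpa using this
  · have := mul_mem (inv_mem hx2) h; simpa using this

private lemma aux_sq {G : Type*} [Group G] (K1 K2 K3 : Subgroup G)
    (cover : ∀ g : G, g ∈ K1 ∨ g ∈ K2 ∨ g ∈ K3)
    (h13 : ∀ t, t ∈ K1 → t ∈ K3 → t ∈ K2)
    (y : G) (hy2 : y ∈ K2) (hy1 : y ∉ K1) (hy3 : y ∉ K3)
    (g : G) (hg : g ∈ K1) : g ^ 2 ∈ K2 := by
  by_cases hg2 : g ∈ K2
  · exact pow_mem hg2 2
  by_cases hg3 : g ∈ K3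
  · exact pow_mem (h13 g hg hg3) 2
  have hgy1 : g * y ∉ K1 := fun h => hy1 (by have := mul_mem (inv_mem hg) h; simpa using this)
  have hgy2 : g * y ∉ K2 := fun h => hg2 (by have := mul_mem h (inv_mem hy2); simpa using this)
  have hgy3 : g * y ∈ K3 := ((cover (g * y)).resolve_left hgy1).resolve_left hgy2
  have hggy1 : g * (g * y) ∉ K1 := fun h =>
    hgy1 (by have := mul_mem (inv_mem hg) h; simpa using this)
  have hggy3 : g * (g * y) ∉ K3 := fun h =>
    hg3 (by have := mul_mem h (inv_mem hgy3); rwa [mul_inv_cancel_right] at this)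
  have hggy2 : g * (g * y) ∈ K2 := ((cover _).resolve_left hggy1).resolve_right hggy3
  have h2 : g * (g * y) * y⁻¹ ∈ K2 := mul_mem hggy2 (inv_mem hy2)
  have he : g * (g * y) * y⁻¹ = g ^ 2 := by rw [pow_two]; group
  rwa [he] at h2

/-! Q8 specific facts -/

private def q8gen : Fin 3 → QuaternionGroup 2 := ![a 1, xa 0, xa 1]

private lemma q8mul : ∀ (k : Fin 3) (x y : QuaternionGroup 2),
    (∃ j : Fin 4, x = q8gen k ^ (j : ℕ)) → (∃ j : Fin 4, y = q8gen k ^ (j : ℕ)) →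
    (∃ j : Fin 4, x * y = q8gen k ^ (j : ℕ)) := by decide

private lemma q8inv : ∀ (k : Fin 3) (x : QuaternionGroup 2),
    (∃ j : Fin 4, x = q8gen k ^ (j : ℕ)) → (∃ j : Fin 4, x⁻¹ = q8gen k ^ (j : ℕ)) := by decide

private def q8M (k : Fin 3) : Subgroup (QuaternionGroup 2) where
  carrier := {x | ∃ j : Fin 4, x = q8gen k ^ (j : ℕ)}
  mul_mem' := fun {x y} hx hy => q8mul _ x y hx hy
  one_mem' := ⟨0, (pow_zero _).symm⟩
  inv_mem' := fun {x} hx => q8inv _ x hx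

private lemma mem_q8M {k : Fin 3} {q : QuaternionGroup 2} :
    q ∈ q8M k ↔ ∃ j : Fin 4, q = q8gen k ^ (j : ℕ) := Iff.rfl

private lemma q8cov : ∀ q : QuaternionGroup 2,
    (∃ j : Fin 4, q = q8gen 0 ^ (j : ℕ)) ∨ (∃ j : Fin 4, q = q8gen 1 ^ (j : ℕ)) ∨
    (∃ j : Fin 4, q = q8gen 2 ^ (j : ℕ)) := by decide

private lemma q8gen_spec : ∀ (k : Fin 3) (q : QuaternionGroup 2),
    (¬∃ j : Fin 4, q = q8gen k ^ (j : ℕ)) → ∀ s : QuaternionGroup 2,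
    ∃ (i : Fin 4) (j : Fin 2), s = q8gen k ^ (i : ℕ) * q ^ (j : ℕ) := by decide

private def PP (A : Type*) [Group A] (k : Fin 3) : Subgroup (QuaternionGroup 2 × A) :=
  (q8M k).prod ⊤

private lemma mem_PP {A : Type*} [Group A] {k : Fin 3} {q : QuaternionGroup 2} {b : A} :
    ((q, b) : QuaternionGroup 2 × A) ∈ PP A k ↔ ∃ j : Fin 4, q = q8gen k ^ (j : ℕ) :=
  ⟨fun h => (Subgroup.mem_prod.mp h).1, fun h => Subgroup.mem_prod.mpr ⟨h, Subgroup.mem_top _⟩⟩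

private lemma PP_ne {A : Type*} [Group A] {k l : Fin 3} (h : k ≠ l) : PP A k ≠ PP A l := by
  have key : ∀ k l : Fin 3, k ≠ l →
      ∃ q : QuaternionGroup 2, (∃ j : Fin 4, q = q8gen k ^ (j : ℕ)) ∧
        ¬(∃ j : Fin 4, q = q8gen l ^ (j : ℕ)) := by decide
  obtain ⟨q, hq1, hq2⟩ := key k l h
  intro he
  have : ((q, (1 : A)) : QuaternionGroup 2 × A) ∈ PP A l := he ▸ mem_PP.mpr hq1
  exact hq2 (mem_PP.mp this)

private lemma PP_ne_top {A : Type*} [Group A] (k : Fin 3) : PP A k ≠ ⊤ := by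
  have key : ∀ k : Fin 3, ¬∃ j : Fin 4,
      (![xa 0, a 1, a 1] k : QuaternionGroup 2) = q8gen k ^ (j : ℕ) := by decide
  intro h
  exact key k (mem_PP.mp ((Subgroup.eq_top_iff' _).mp h (![xa 0, a 1, a 1] k, 1)))

private lemma eq_PP {A : Type*} [Group A] (H : Subgroup (QuaternionGroup 2 × A))
    (hA : ∀ b : A, ((1 : QuaternionGroup 2), b) ∈ H) (hne : H ≠ ⊤) (k : Fin 3)
    (hg : ((q8gen k, 1) : QuaternionGroup 2 × A) ∈ H) : H = PP A k := by
  have hpow : ∀ i : ℕ, ((q8gen k ^ i, (1 : A)) : QuaternionGroup 2 × A) ∈ H := fun i => by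
    have := pow_mem hg i
    rwa [Prod.pow_mk, one_pow] at this
  apply le_antisymm
  · rintro ⟨q, b⟩ hqb
    have hq1 : ((q, (1 : A)) : QuaternionGroup 2 × A) ∈ H := by
      have := mul_mem hqb (inv_mem (hA b))
      simpa using this
    rw [mem_PP]
    by_contra hq
    apply hne
    rw [Subgroup.eq_top_iff']
    rintro ⟨s, c⟩
    obtain ⟨i, j, hs⟩ := q8gen_spec k q hq s
    have h2 : ((q ^ (j : ℕ), (1 : A)) : QuaternionGroup 2 × A) ∈ H := by
      have := pow_mem hq1 (j : ℕ)
      rwa [Prod.pow_mk, one_pow] at this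
    have h3 : ((s, (1 : A)) : QuaternionGroup 2 × A) ∈ H := by
      have := mul_mem (hpow (i : ℕ)) h2
      rw [hs]; simpa using this
    have := mul_mem h3 (hA c)
    simpa using this
  · rintro ⟨q, b⟩ hqb
    obtain ⟨j, rfl⟩ := mem_PP.mp hqb
    have := mul_mem (hpow (j : ℕ)) (hA b)
    simpa using this

theorem q8_times_odd_unique_cover
    (A : Type*) [Group A] [Finite A] (hA : Odd (Nat.card A)) :
    ∃! S : Set (Subgroup (QuaternionGroup 2 × A)),
      ∃ H1 H2 H3 : Subgroup (QuaternionGroup 2 × A), S = {H1, H2, H3} ∧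
        H1 ≠ H2 ∧ H1 ≠ H3 ∧ H2 ≠ H3 ∧
        H1 ≠ ⊤ ∧ H2 ≠ ⊤ ∧ H3 ≠ ⊤ ∧
        (H1 : Set (QuaternionGroup 2 × A)) ∪ (H2 : Set (QuaternionGroup 2 × A)) ∪
          (H3 : Set (QuaternionGroup 2 × A)) = Set.univ := by
  have hPne01 : PP A 0 ≠ PP A 1 := PP_ne (by decide)
  have hPne02 : PP A 0 ≠ PP A 2 := PP_ne (by decide)
  have hPne12 : PP A 1 ≠ PP A 2 := PP_ne (by decide)
  refine ⟨{PP A 0, PP A 1, PP A 2}, ⟨PP A 0, PP A 1, PP A 2, rfl, hPne01, hPne02, hPne12,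
    PP_ne_top 0, PP_ne_top 1, PP_ne_top 2, ?_⟩, ?_⟩
  · ext ⟨q, b⟩
    simp only [Set.mem_union, SetLike.mem_coe, Set.mem_univ, iff_true]
    rcases q8cov q with h | h | h
    · exact Or.inl (Or.inl (mem_PP.mpr h))
    · exact Or.inl (Or.inr (mem_PP.mpr h))
    · exact Or.inr (mem_PP.mpr h)
  · rintro S ⟨H1, H2, H3, rfl, h12, h13, h23, t1, t2, t3, hcov⟩
    have cov : ∀ g : QuaternionGroup 2 × A, g ∈ H1 ∨ g ∈ H2 ∨ g ∈ H3 := by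
      intro g
      have hg : g ∈ (Set.univ : Set (QuaternionGroup 2 × A)) := Set.mem_univ g
      rw [← hcov] at hg
      simpa [or_assoc] using hg
    obtain ⟨x1, hx12, hx13⟩ := not_cover_two t2 t3
    have hx11 : x1 ∈ H1 := ((cov x1).resolve_right (fun h => h.elim hx12 hx13))
    obtain ⟨x2, hx21, hx23⟩ := not_cover_two t1 t3
    have hx22 : x2 ∈ H2 := by rcases cov x2 with h | h | h <;> tauto
    obtain ⟨x3, hx31, hx32⟩ := not_cover_two t1 t2
    have hx33 : x3 ∈ H3 := by rcases cov x3 with h | h | h <;> tauto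
    have i23 : ∀ t, t ∈ H2 → t ∈ H3 → t ∈ H1 := by
      intro t ht2 ht3
      have h1 : x1 * t ∉ H2 := fun h => hx12 (by have := mul_mem h (inv_mem ht2); simpa using this)
      have h2 : x1 * t ∉ H3 := fun h => hx13 (by have := mul_mem h (inv_mem ht3); simpa using this)
      have h3 : x1 * t ∈ H1 := by rcases cov (x1 * t) with h | h | h <;> tauto
      have := mul_mem (inv_mem hx11) h3
      simpa using this
    have i13 : ∀ t, t ∈ H1 → t ∈ H3 → t ∈ H2 := by
      intro t ht1 ht3
      have h1 : x2 * t ∉ H1 := fun h => hx21 (by have := mul_mem h (inv_mem ht1); simpa using this)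
      have h2 : x2 * t ∉ H3 := fun h => hx23 (by have := mul_mem h (inv_mem ht3); simpa using this)
      have h3 : x2 * t ∈ H2 := by rcases cov (x2 * t) with h | h | h <;> tauto
      have := mul_mem (inv_mem hx22) h3
      simpa using this
    have i12 : ∀ t, t ∈ H1 → t ∈ H2 → t ∈ H3 := by
      intro t ht1 ht2
      have h1 : x3 * t ∉ H1 := fun h => hx31 (by have := mul_mem h (inv_mem ht1); simpa using this)
      have h2 : x3 * t ∉ H2 := fun h => hx32 (by have := mul_mem h (inv_mem ht2); simpa using this)
      have h3 : x3 * t ∈ H3 := by rcases cov (x3 * t) with h | h | h <;> tauto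
      have := mul_mem (inv_mem hx33) h3
      simpa using this
    have sqall : ∀ g : QuaternionGroup 2 × A, g ^ 2 ∈ H1 ∧ g ^ 2 ∈ H2 ∧ g ^ 2 ∈ H3 := by
      intro g
      have c1 : ∀ g, g ∈ H1 ∨ g ∈ H3 ∨ g ∈ H2 := fun g => by rcases cov g with h | h | h <;> tauto
      have c2 : ∀ g, g ∈ H2 ∨ g ∈ H1 ∨ g ∈ H3 := fun g => by rcases cov g with h | h | h <;> tauto
      have c3 : ∀ g, g ∈ H2 ∨ g ∈ H3 ∨ g ∈ H1 := fun g => by rcases cov g with h | h | h <;> tauto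
      have c4 : ∀ g, g ∈ H3 ∨ g ∈ H1 ∨ g ∈ H2 := fun g => by rcases cov g with h | h | h <;> tauto
      have c5 : ∀ g, g ∈ H3 ∨ g ∈ H2 ∨ g ∈ H1 := fun g => by rcases cov g with h | h | h <;> tauto
      rcases cov g with h | h | h
      · exact ⟨pow_mem h 2,
          aux_sq H1 H2 H3 cov i13 x2 hx22 hx21 hx23 g h,
          aux_sq H1 H3 H2 c1 i12 x3 hx33 hx31 hx32 g h⟩
      · exact ⟨aux_sq H2 H1 H3 c2 i23 x1 hx11 hx12 hx13 g h, pow_mem h 2,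
          aux_sq H2 H3 H1 c3 (fun t a b => i12 t b a) x3 hx33 hx32 hx31 g h⟩
      · exact ⟨aux_sq H3 H1 H2 c4 (fun t a b => i23 t b a) x1 hx11 hx13 hx12 g h,
          aux_sq H3 H2 H1 c5 (fun t a b => i13 t b a) x2 hx22 hx23 hx21 g h, pow_mem h 2⟩
    have sqrt : ∀ b : A, ∃ c : A, c ^ 2 = b := by
      intro b
      obtain ⟨r, hr⟩ := hA
      refine ⟨b ^ ((Nat.card A + 1) / 2), ?_⟩
      rw [← pow_mul]
      have h2 : (Nat.card A + 1) / 2 * 2 = Nat.card A + 1 := by omega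
      rw [h2, pow_succ, pow_card_eq_one', one_mul]
    have hA1 : ∀ i : Fin 3, ∀ b : A, ((1 : QuaternionGroup 2), b) ∈ ![H1, H2, H3] i := by
      intro i b
      obtain ⟨c, hc⟩ := sqrt b
      have h := sqall ((1 : QuaternionGroup 2), c)
      have he : ((1 : QuaternionGroup 2), c) ^ 2 = ((1 : QuaternionGroup 2), b) := by
        rw [Prod.pow_mk, one_pow, hc]
      fin_cases i
      · simpa [he] using h.1
      · simpa [he] using h.2.1
      · simpa [he] using h.2.2
    have assign : ∀ k : Fin 3, PP A k ∈ ({H1, H2, H3} : Set (Subgroup (QuaternionGroup 2 × A))) := by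
      intro k
      rcases cov (q8gen k, 1) with h | h | h
      · exact Set.mem_insert_iff.mpr (Or.inl (eq_PP H1 (hA1 0) t1 k h).symm)
      · exact Set.mem_insert_iff.mpr (Or.inr (Set.mem_insert_iff.mpr
          (Or.inl (eq_PP H2 (hA1 1) t2 k h).symm)))
      · exact Set.mem_insert_iff.mpr (Or.inr (Set.mem_insert_iff.mpr
          (Or.inr (eq_PP H3 (hA1 2) t3 k h).symm)))
    have hsub : ({PP A 0, PP A 1, PP A 2} : Set (Subgroup (QuaternionGroup 2 × A))) ⊆
        {H1, H2, H3} := by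
      intro X hX
      simp only [Set.mem_insert_iff, Set.mem_singleton_iff] at hX
      rcases hX with rfl | rfl | rfl
      · exact assign 0
      · exact assign 1
      · exact assign 2
    have hH : ({H1, H2, H3} : Set (Subgroup (QuaternionGroup 2 × A))).ncard = 3 := by
      rw [Set.ncard_insert_of_notMem (by simp [h12, h13]), Set.ncard_pair h23]
    have hP : ({PP A 0, PP A 1, PP A 2} : Set (Subgroup (QuaternionGroup 2 × A))).ncard = 3 := by
      rw [Set.ncard_insert_of_notMem (by simp [hPne01, hPne02]), Set.ncard_pair hPne12]
    exact (Set.eq_of_subset_of_ncard_le hsub (by rw [hH, hP]) (Set.toFinite _)).symm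
end
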